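/- arXiv:2001.06321 — 2 statements merged into one kernel-verified Lean document; each statement's English description precedes it below -/
import Mathlib

section
/- Let π be a Gaussian prime not dividing 2 and α ∈ ℤ[i] coprime to π. Then there exists a unique k ∈ {0,1,2,3} such that α^((Nπ − 1)/4) ≡ i^k (mod π), where Nπ is the cardinality of ℤ[i]/(π). -/
open Zsqrtd

local notation "ℤ[i]" => GaussianInt

/-- The imaginary unit `i` in `ℤ[i]`. -/
def gi : ℤ[i] := Zsqrtd.sqrtd

/-- `α` is primary if `α ≡ 1 (mod 2(1+i))`. -/
def IsPrimary (α : ℤ[i]) : Prop := 2 * (1 + gi) ∣ α - 1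

noncomputable def giLinearEquiv : ℤ[i] ≃ₗ[ℤ] (Fin 2 → ℤ) where
  toFun z := ![z.re, z.im]
  map_add' := by intros a b; funext i; fin_cases i <;> simp
  map_smul' := by
    intros n z; funext i
    fin_cases i <;> simp [zsmul_eq_mul, Zsqrtd.re_mul, Zsqrtd.im_mul]
  invFun f := ⟨f 0, f 1⟩
  left_inv z := by ext <;> simp
  right_inv f := by funext i; fin_cases i <;> simp

noncomputable def giBasis : Module.Basis (Fin 2) ℤ ℤ[i] := Module.Basis.ofEquivFun giLinearEquiv

instance : Module.Free ℤ ℤ[i] := Module.Free.of_basis giBasis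
instance : Module.Finite ℤ ℤ[i] := Module.Finite.of_basis giBasis

lemma quartic_aux {F : Type*} [Field F] [Fintype F] (ι β : F)
    (hι2 : ι ^ 2 = -1) (h2 : (2 : F) ≠ 0) (hβ : β ≠ 0) :
    ∃! k : Fin 4, β ^ ((Fintype.card F - 1) / 4) = ι ^ (k : ℕ) := by
  letI := Classical.decEq F
  have hm1 : (-1 : F) ≠ 1 := by
    intro h
    apply h2
    linear_combination -h
  have hι4 : ι ^ 4 = 1 := by
    have : ι ^ 4 = (ι ^ 2) ^ 2 := by ring
    rw [this, hι2]; ring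
  have hord : orderOf ι = 4 := by
    have h2' : ι ^ 2 ≠ 1 := by rw [hι2]; exact hm1
    have : orderOf ι = 2 ^ 2 :=
      orderOf_eq_prime_pow (by simpa using h2') (by simpa using hι4)
    simpa using this
  have hιne : ι ≠ 0 := by
    intro h
    apply h2
    have h0 : (-1 : F) = 0 := by rw [← hι2, h]; ring
    linear_combination -2 * h0
  set ιu : Fˣ := Units.mk0 ι hιne with hιu
  have hordu : orderOf ιu = 4 := by
    rw [← orderOf_units, hιu, Units.val_mk0]; exact hord
  have h4dvd : 4 ∣ Fintype.card F - 1 := by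
    rw [← hordu]
    have := orderOf_dvd_card (x := ιu)
    rwa [Fintype.card_units] at this
  set m := (Fintype.card F - 1) / 4 with hm
  have hm4 : m * 4 = Fintype.card F - 1 := Nat.div_mul_cancel h4dvd
  set γ : F := β ^ m with hγ
  have hγ4 : γ ^ 4 = 1 := by
    rw [hγ, ← pow_mul, hm4]
    exact FiniteField.pow_card_sub_one_eq_one β hβ
  have hinj : ∀ j k : Fin 4, ι ^ (j : ℕ) = ι ^ (k : ℕ) → j = k := by
    intro j k h
    have hu : ιu ^ (j : ℕ) = ιu ^ (k : ℕ) := by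
      apply Units.ext
      simpa [hιu] using h
    have := pow_inj_mod.mp hu
    rw [hordu, Nat.mod_eq_of_lt j.isLt, Nat.mod_eq_of_lt k.isLt] at this
    exact Fin.ext this
  have hex : ∃ k : Fin 4, γ = ι ^ (k : ℕ) := by
    have hsq : (γ ^ 2) ^ 2 = 1 := by rw [← pow_mul]; exact hγ4
    rcases sq_eq_one_iff.mp hsq with h | h
    · rcases sq_eq_one_iff.mp h with h1 | h1
      · exact ⟨⟨0, by norm_num⟩, by simpa using h1⟩
      · exact ⟨⟨2, by norm_num⟩, by show γ = ι ^ 2; rw [h1, hι2]⟩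
    · have hz : (γ - ι) * (γ + ι) = 0 := by
        have h0 : γ ^ 2 - ι ^ 2 = 0 := by rw [h, hι2]; ring
        linear_combination h0
      rcases mul_eq_zero.mp hz with h1 | h1
      · exact ⟨⟨1, by norm_num⟩, by show γ = ι ^ 1; rw [pow_one]; exact sub_eq_zero.mp h1⟩
      · refine ⟨⟨3, by norm_num⟩, ?_⟩
        show γ = ι ^ 3
        have hγι : γ = -ι := by linear_combination h1
        have h3 : ι ^ 3 = ι ^ 2 * ι := by ring
        rw [hγι, h3, hι2]; ring
  obtain ⟨k, hk⟩ := hex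
  exact ⟨k, hk, fun j hj => hinj j k (hj.symm.trans hk)⟩

/-- For an odd Gaussian prime `π` and `α` coprime to `π`, there is a unique
`k ∈ {0,1,2,3}` with `α ^ ((Nπ - 1)/4) ≡ i^k (mod π)`, where `Nπ` is the
cardinality of `ℤ[i]/(π)`. -/
theorem quartic_residue_exists_unique (π α : ℤ[i]) (hπ : Prime π)
    (hodd : ¬ π ∣ 2) (hcop : IsCoprime α π) :
    ∃! k : Fin 4,
      π ∣ α ^ ((Nat.card (ℤ[i] ⧸ Ideal.span {π}) - 1) / 4) - gi ^ (k : ℕ) := by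
  set I : Ideal ℤ[i] := Ideal.span {π} with hI
  have hIbot : I ≠ ⊥ := by
    simp [hI, Ideal.span_singleton_eq_bot, hπ.ne_zero]
  letI : Fintype (ℤ[i] ⧸ I) := @Fintype.ofFinite _ (Ideal.finiteQuotientOfFreeOfNeBot I hIbot)
  haveI : I.IsMaximal := PrincipalIdealRing.isMaximal_of_irreducible hπ.irreducible
  letI : Field (ℤ[i] ⧸ I) := Ideal.Quotient.field I
  have hqcard : Nat.card (ℤ[i] ⧸ I) = Fintype.card (ℤ[i] ⧸ I) :=
    Nat.card_eq_fintype_card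
  have hdvd : ∀ x : ℤ[i], π ∣ x ↔ Ideal.Quotient.mk I x = 0 := fun x =>
    (Ideal.Quotient.eq_zero_iff_dvd π x).symm
  have hgi2 : gi * gi = -1 := by simp [gi, Zsqrtd.dmuld]
  have hι2 : (Ideal.Quotient.mk I gi) ^ 2 = -1 := by
    rw [pow_two, ← map_mul, hgi2, map_neg, map_one]
  have h2ne : (2 : ℤ[i] ⧸ I) ≠ 0 := by
    intro h
    exact hodd ((hdvd 2).mpr (by rw [map_ofNat]; exact h))
  have hβ : (Ideal.Quotient.mk I α) ≠ 0 := by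
    intro h
    have hd : π ∣ α := (hdvd α).mpr h
    exact hπ.not_unit (hcop.isUnit_of_dvd' hd dvd_rfl)
  obtain ⟨k, hk, huniq⟩ :=
    quartic_aux (Ideal.Quotient.mk I gi) (Ideal.Quotient.mk I α) hι2 h2ne hβ
  have key : ∀ j : Fin 4,
      (π ∣ α ^ ((Nat.card (ℤ[i] ⧸ I) - 1) / 4) - gi ^ (j : ℕ)) ↔
        (Ideal.Quotient.mk I α) ^ ((Fintype.card (ℤ[i] ⧸ I) - 1) / 4)
          = (Ideal.Quotient.mk I gi) ^ (j : ℕ) := by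
    intro j
    rw [hdvd, map_sub, map_pow, map_pow, sub_eq_zero, hqcard]
  exact ⟨k, (key k).mpr hk, fun j hj => huniq j ((key j).mp hj)⟩
end

section
/- If q is a rational prime congruent to 3 modulo 4 and a is a nonzero integer not divisible by q, then the quartic residue symbol (a/q)₄ in ℤ[i] equals 1. -/
open Zsqrtd

local notation "ℤ[i]" => GaussianInt

open scoped Classical in
/-- The quartic residue symbol `(α/π)₄`: the unique power of `i` congruent to
`α ^ ((Nπ - 1)/4)` modulo `π`, where `Nπ` is the cardinality of `ℤ[i]/(π)`. -/
noncomputable def quartic (α π : ℤ[i]) : ℤ[i] :=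
  if h : ∃ k : Fin 4,
      π ∣ α ^ ((Nat.card (ℤ[i] ⧸ Ideal.span {π}) - 1) / 4) - gi ^ (k : ℕ)
  then gi ^ ((h.choose : Fin 4) : ℕ) else 0

section aux

variable (q : ℕ) [NeZero q]

/-- The componentwise reduction map `ℤ[i] → ZMod q × ZMod q`. -/
def redMap : ℤ[i] →+ ZMod q × ZMod q where
  toFun x := ((x.re : ZMod q), (x.im : ZMod q))
  map_zero' := by simp
  map_add' x y := by simp [Zsqrtd.re_add, Zsqrtd.im_add]

lemma redMap_surj : Function.Surjective (redMap q) := by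
  rintro ⟨u, v⟩
  refine ⟨⟨(u.val : ℤ), (v.val : ℤ)⟩, ?_⟩
  simp [redMap, ZMod.natCast_val, ZMod.cast_id]

omit [NeZero q] in
lemma redMap_ker :
    LinearMap.ker (redMap q).toIntLinearMap
      = Submodule.restrictScalars ℤ (Ideal.span {((q : ℕ) : ℤ[i])}) := by
  ext x
  simp only [LinearMap.mem_ker, AddMonoidHom.coe_toIntLinearMap, Submodule.restrictScalars_mem,
    Ideal.mem_span_singleton, redMap, AddMonoidHom.coe_mk, ZeroHom.coe_mk, Prod.mk_eq_zero]
  rw [ZMod.intCast_zmod_eq_zero_iff_dvd, ZMod.intCast_zmod_eq_zero_iff_dvd]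
  have : ((q : ℕ) : ℤ[i]) = ((q : ℤ) : ℤ[i]) := by push_cast; ring
  rw [this, Zsqrtd.intCast_dvd]

lemma card_quot_span : Nat.card (ℤ[i] ⧸ Ideal.span {((q : ℕ) : ℤ[i])}) = q ^ 2 := by
  have e1 := Submodule.Quotient.restrictScalarsEquiv ℤ (Ideal.span {((q : ℕ) : ℤ[i])})
  have e2 := (redMap q).toIntLinearMap.quotKerEquivOfSurjective (redMap_surj q)
  rw [redMap_ker] at e2
  have := Nat.card_congr ((e1.symm.toEquiv).trans e2.toEquiv)
  rw [this, Nat.card_prod, Nat.card_zmod]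
  ring

end aux

/-- For a rational prime `q ≡ 3 (mod 4)` and a nonzero integer `a` not
divisible by `q`, the quartic residue symbol `(a/q)₄ = 1`. -/
theorem quartic_rat_prime (q : ℕ) (hq : q.Prime) (h3 : q % 4 = 3)
    (a : ℤ) (ha : a ≠ 0) (hqa : ¬ (q : ℤ) ∣ a) :
    quartic ((a : ℤ) : ℤ[i]) ((q : ℕ) : ℤ[i]) = 1 := by
  haveI : Fact q.Prime := ⟨hq⟩
  haveI : NeZero q := ⟨by omega⟩
  have hq3 : 3 ≤ q := by omega
  set N := Nat.card (ℤ[i] ⧸ Ideal.span {((q : ℕ) : ℤ[i])}) with hNdef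
  have hN : N = q ^ 2 := card_quot_span q
  set m := (N - 1) / 4 with hm
  obtain ⟨t, ht⟩ : ∃ t, q = 4 * t + 3 := ⟨q / 4, by omega⟩
  have hmval : m = (q - 1) * ((q + 1) / 4) := by
    have h1 : N - 1 = 4 * (4 * t ^ 2 + 6 * t + 2) := by
      rw [hN, ht]; ring_nf; omega
    have h4 : (q + 1) / 4 = t + 1 := by omega
    have h5 : q - 1 = 4 * t + 2 := by omega
    rw [hm, h1, h4, h5, Nat.mul_div_cancel_left _ (by norm_num)]
    ring
  have hb : ((a : ZMod q)) ^ m = 1 := by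
    have hb0 : (a : ZMod q) ≠ 0 := by
      rwa [Ne, ZMod.intCast_zmod_eq_zero_iff_dvd]
    rw [hmval, pow_mul, ZMod.pow_card_sub_one_eq_one hb0, one_pow]
  have hintdvd : (q : ℤ) ∣ a ^ m - 1 := by
    rw [← ZMod.intCast_zmod_eq_zero_iff_dvd]
    push_cast
    rw [hb]; ring
  have hdvd0 : ((q : ℕ) : ℤ[i]) ∣ ((a : ℤ) : ℤ[i]) ^ m - 1 := by
    obtain ⟨c, hc⟩ := hintdvd
    refine ⟨((c : ℤ) : ℤ[i]), ?_⟩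
    have h6 : (((a ^ m - 1 : ℤ)) : ℤ[i]) = (((q : ℤ) * c : ℤ) : ℤ[i]) := by rw [hc]
    push_cast at h6 ⊢
    linear_combination h6
  have h' : ∃ k : Fin 4,
      ((q : ℕ) : ℤ[i]) ∣ ((a : ℤ) : ℤ[i]) ^ ((Nat.card (ℤ[i] ⧸ Ideal.span {((q : ℕ) : ℤ[i])}) - 1) / 4) - gi ^ (k : ℕ) :=
    ⟨0, by simpa using hdvd0⟩
  rw [quartic, dif_pos h']
  have hspec := h'.choose_spec
  set k0 := h'.choose with hk0
  have hgi : ((q : ℕ) : ℤ[i]) ∣ gi ^ (k0 : ℕ) - 1 := by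
    have h7 := dvd_sub hdvd0 hspec
    convert h7 using 1
    rw [hm, hNdef]
    ring
  have hcast : ((q : ℕ) : ℤ[i]) = ((q : ℤ) : ℤ[i]) := by push_cast; ring
  rw [hcast, Zsqrtd.intCast_dvd] at hgi
  have hv : (k0 : ℕ) < 4 := k0.2
  interval_cases hkv : (k0 : ℕ)
  · simp
  · exfalso
    have e : (gi ^ 1 - 1).re = -1 := by decide
    have h8 : (q : ℤ) ∣ 1 := by
      have := hgi.1
      rw [e] at this
      exact (dvd_neg).mp this
    have := Int.le_of_dvd one_pos h8
    omega
  · exfalso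
    have e : (gi ^ 2 - 1).re = -2 := by decide
    have h8 : (q : ℤ) ∣ 2 := by
      have := hgi.1
      rw [e] at this
      exact (dvd_neg).mp this
    have := Int.le_of_dvd (by norm_num) h8
    omega
  · exfalso
    have e : (gi ^ 3 - 1).re = -1 := by decide
    have h8 : (q : ℤ) ∣ 1 := by
      have := hgi.1
      rw [e] at this
      exact (dvd_neg).mp this
    have := Int.le_of_dvd one_pos h8
    omega
end
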